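/- Let a > 0 and set u₁ = (3a/2, (√3/2)·a), u₂ = (3a/2, −(√3/2)·a) and w = (a, 0) in the Euclidean plane. For every point x of the plane there exist integers m, n and ε ∈ {0, 1} such that dist x (m·u₁ + n·u₂ + ε·w) ≤ a. -/

import Mathlib

set_option maxHeartbeats 1000000

private lemma hexcore (a : ℝ) (ha : 0 < a) (p q : ℝ)
    (hp0 : 0 ≤ p) (hp1 : p ≤ 3 * a) (hq0 : 0 ≤ q) (hq1 : q ≤ Real.sqrt 3 * a) :
    ∃ m n ε : ℤ, (ε = 0 ∨ ε = 1) ∧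
      (p - (((m : ℝ) + n) * (3 * a / 2) + ε * a))^2 +
      (q - ((m : ℝ) - n) * (Real.sqrt 3 / 2 * a))^2 ≤ a^2 := by
  have sqb : ∀ u v : ℝ, -v ≤ u → u ≤ v → u^2 ≤ v^2 := by
    intro u v h1 h2; nlinarith
  set s := Real.sqrt 3 with hsdef
  have hs0 : 0 ≤ s := Real.sqrt_nonneg 3
  have hsa : 0 ≤ s / 2 * a := by positivity
  have h34 : (s / 2 * a)^2 = 3 / 4 * a^2 := by
    have hs : s ^ 2 = 3 := Real.sq_sqrt (by norm_num)
    nlinarith [hs]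
  rcases le_or_gt q (s / 2 * a) with hq | hq
  · rcases le_or_gt p (a / 2) with h1 | h1
    · refine ⟨0, 0, 0, Or.inl rfl, ?_⟩
      push_cast
      have b1 := sqb p (a / 2) (by linarith) h1
      have b2 := sqb q (s / 2 * a) (by linarith) hq
      linarith [b1, b2, h34]
    rcases le_or_gt p (3 * a / 2) with h2 | h2
    · refine ⟨0, 0, 1, Or.inr rfl, ?_⟩
      push_cast
      have b1 := sqb (p - a) (a / 2) (by linarith) (by linarith)
      have b2 := sqb q (s / 2 * a) (by linarith) hq
      linarith [b1, b2, h34]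
    rcases le_or_gt p (2 * a) with h3 | h3
    · refine ⟨1, 0, 0, Or.inl rfl, ?_⟩
      push_cast
      have b1 := sqb (p - 3 * a / 2) (a / 2) (by linarith) (by linarith)
      have b2 := sqb (q - s / 2 * a) (s / 2 * a) (by linarith) (by linarith)
      linarith [b1, b2, h34]
    rcases le_or_gt p (5 * a / 2) with h4 | h4
    · refine ⟨1, 0, 1, Or.inr rfl, ?_⟩
      push_cast
      have b1 := sqb (p - 5 * a / 2) (a / 2) (by linarith) (by linarith)
      have b2 := sqb (q - s / 2 * a) (s / 2 * a) (by linarith) (by linarith)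
      linarith [b1, b2, h34]
    · refine ⟨1, 1, 0, Or.inl rfl, ?_⟩
      push_cast
      have b1 := sqb (p - 3 * a) (a / 2) (by linarith) (by linarith)
      have b2 := sqb q (s / 2 * a) (by linarith) hq
      linarith [b1, b2, h34]
  · have hq1' : q ≤ s / 2 * a + s / 2 * a := by
      have : s * a = s / 2 * a + s / 2 * a := by ring
      linarith [hq1, this.symm.le]
    rcases le_or_gt p (a / 2) with h1 | h1
    · refine ⟨1, -1, 0, Or.inl rfl, ?_⟩
      push_cast
      have b1 := sqb p (a / 2) (by linarith) h1
      have b2 := sqb (q - s * a) (s / 2 * a) (by linarith) (by linarith)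
      linarith [b1, b2, h34]
    rcases le_or_gt p (3 * a / 2) with h2 | h2
    · refine ⟨1, -1, 1, Or.inr rfl, ?_⟩
      push_cast
      have b1 := sqb (p - a) (a / 2) (by linarith) (by linarith)
      have b2 := sqb (q - s * a) (s / 2 * a) (by linarith) (by linarith)
      linarith [b1, b2, h34]
    rcases le_or_gt p (2 * a) with h3 | h3
    · refine ⟨1, 0, 0, Or.inl rfl, ?_⟩
      push_cast
      have b1 := sqb (p - 3 * a / 2) (a / 2) (by linarith) (by linarith)
      have b2 := sqb (q - s / 2 * a) (s / 2 * a) (by linarith) (by linarith)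
      linarith [b1, b2, h34]
    rcases le_or_gt p (5 * a / 2) with h4 | h4
    · refine ⟨1, 0, 1, Or.inr rfl, ?_⟩
      push_cast
      have b1 := sqb (p - 5 * a / 2) (a / 2) (by linarith) (by linarith)
      have b2 := sqb (q - s / 2 * a) (s / 2 * a) (by linarith) (by linarith)
      linarith [b1, b2, h34]
    · refine ⟨2, 0, 0, Or.inl rfl, ?_⟩
      push_cast
      have b1 := sqb (p - 3 * a) (a / 2) (by linarith) (by linarith)
      have b2 := sqb (q - s * a) (s / 2 * a) (by linarith) (by linarith)
      linarith [b1, b2, h34]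

/-- The covering radius of the vertex set of the regular hexagonal (honeycomb)
grid with edge length `a` is at most `a`: every point of the Euclidean plane is
within distance `a` of some vertex `m·u₁ + n·u₂ + ε·w`, with
`u₁ = (3a/2, (√3/2)a)`, `u₂ = (3a/2, −(√3/2)a)`, `w = (a, 0)`, and
`ε ∈ {0, 1}`. -/
theorem hexagonal_grid_covers (a : ℝ) (ha : 0 < a)
    (x : EuclideanSpace ℝ (Fin 2)) :
    ∃ (m n ε : ℤ), (ε = 0 ∨ ε = 1) ∧
      dist x (m • (!₂[3 * a / 2, Real.sqrt 3 / 2 * a] : EuclideanSpace ℝ (Fin 2)) +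
              n • (!₂[3 * a / 2, -(Real.sqrt 3 / 2 * a)] : EuclideanSpace ℝ (Fin 2)) +
              ε • (!₂[a, 0] : EuclideanSpace ℝ (Fin 2))) ≤ a := by
  have hdist : ∀ m n ε : ℤ,
      dist x (m • (!₂[3 * a / 2, Real.sqrt 3 / 2 * a] : EuclideanSpace ℝ (Fin 2)) +
              n • (!₂[3 * a / 2, -(Real.sqrt 3 / 2 * a)] : EuclideanSpace ℝ (Fin 2)) +
              ε • (!₂[a, 0] : EuclideanSpace ℝ (Fin 2)))
      = Real.sqrt ((x 0 - (((m:ℝ)+n)*(3*a/2) + ε*a))^2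
          + (x 1 - ((m:ℝ)-n)*(Real.sqrt 3/2*a))^2) := by
    intro m n ε
    rw [EuclideanSpace.dist_eq, Fin.sum_univ_two]
    simp [Real.dist_eq, sq_abs, PiLp.add_apply, PiLp.smul_apply]
    ring_nf
  have hs0 : (0:ℝ) < Real.sqrt 3 := Real.sqrt_pos.mpr (by norm_num)
  have h3a : (0:ℝ) < 3 * a := by linarith
  have hsa : (0:ℝ) < Real.sqrt 3 * a := by positivity
  set j : ℤ := ⌊x 0 / (3 * a)⌋ with hj
  set k : ℤ := ⌊x 1 / (Real.sqrt 3 * a)⌋ with hk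
  have hp0 : 0 ≤ x 0 - 3 * a * j := by
    have := Int.floor_le (x 0 / (3 * a))
    rw [le_div_iff₀ h3a] at this
    linarith
  have hp1 : x 0 - 3 * a * j ≤ 3 * a := by
    have := Int.lt_floor_add_one (x 0 / (3 * a))
    rw [div_lt_iff₀ h3a] at this
    push_cast at this
    nlinarith
  have hq0 : 0 ≤ x 1 - Real.sqrt 3 * a * k := by
    have := Int.floor_le (x 1 / (Real.sqrt 3 * a))
    rw [le_div_iff₀ hsa] at this
    linarith
  have hq1 : x 1 - Real.sqrt 3 * a * k ≤ Real.sqrt 3 * a := by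
    have := Int.lt_floor_add_one (x 1 / (Real.sqrt 3 * a))
    rw [div_lt_iff₀ hsa] at this
    push_cast at this
    nlinarith
  obtain ⟨m₀, n₀, ε, hε, hcov⟩ :=
    hexcore a ha (x 0 - 3 * a * j) (x 1 - Real.sqrt 3 * a * k) hp0 hp1 hq0 hq1
  refine ⟨m₀ + j + k, n₀ + j - k, ε, hε, ?_⟩
  rw [hdist]
  have key : ((x 0 - (((((m₀ + j + k) : ℤ):ℝ) + ((n₀ + j - k : ℤ):ℝ)) * (3*a/2) + ε*a))^2
      + (x 1 - ((((m₀ + j + k):ℤ):ℝ) - ((n₀ + j - k : ℤ):ℝ)) * (Real.sqrt 3/2*a))^2)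
      = ((x 0 - 3 * a * j) - (((m₀:ℝ) + n₀) * (3*a/2) + ε*a))^2
      + ((x 1 - Real.sqrt 3 * a * k) - ((m₀:ℝ) - n₀) * (Real.sqrt 3/2*a))^2 := by
    push_cast
    ring
  rw [key]
  calc Real.sqrt _ ≤ Real.sqrt (a^2) := Real.sqrt_le_sqrt hcov
    _ = a := by rw [Real.sqrt_sq ha.le]
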